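/- If μ ≠ ν, then the likelihood-ratio product Π_{k=1}^{N} ν(X_k)/μ(X_k) converges to 0 almost surely as N → ∞ (almost surely μ(X_k) > 0 for every k, so the ratios are well defined). -/

import Mathlib

open MeasureTheory Filter

/-- Expectation of a finite product of independent nonnegative random variables. -/
lemma my_integral_finset_prod_of_indep {ι Ω : Type*} [MeasurableSpace Ω] {P : Measure Ω}
    [IsProbabilityMeasure P] (F : ι → Ω → ℝ) (hmeas : ∀ i, Measurable (F i))
    (hnonneg : ∀ i ω, 0 ≤ F i ω)
    (hindep : ProbabilityTheory.iIndepFun F P)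
    (t : Finset ι) :
    ∫ ω, ∏ j ∈ t, F j ω ∂P = ∏ j ∈ t, ∫ ω, F j ω ∂P := by
  classical
  induction t using Finset.induction_on with
  | empty => simp
  | insert i t hi ih =>
    have hind : ProbabilityTheory.IndepFun (∏ j ∈ t, F j) (F i) P :=
      hindep.indepFun_finsetProd_of_notMem hmeas hi
    have h := hind.symm.integral_mul_eq_mul_integral
      (hmeas i).aestronglyMeasurable
      (by simpa [Finset.prod_fn] using (Finset.measurable_prod t fun j _ => hmeas j).aestronglyMeasurable)
    rw [Finset.prod_insert hi, ← ih]
    have heq : (fun ω => ∏ j ∈ insert i t, F j ω) = F i * ∏ j ∈ t, F j := by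
      funext ω
      simp [Finset.prod_insert hi]
    calc ∫ ω, ∏ j ∈ insert i t, F j ω ∂P = ∫ ω, (F i * ∏ j ∈ t, F j) ω ∂P := by rw [heq]
    _ = (∫ ω, F i ω ∂P) * ∫ ω, (∏ j ∈ t, F j) ω ∂P := h
    _ = (∫ ω, F i ω ∂P) * ∫ ω, ∏ j ∈ t, F j ω ∂P := by
          congr 1; apply integral_congr_ae; filter_upwards with ω; simp

/-- **The likelihood-ratio product of distinct pmfs tends to zero almost surely.** Let `μ` and `ν`
be probability mass functions on a finite nonempty set `S` and let `(X_k)_{k ≥ 1}` be i.i.d.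
`S`-valued random variables with common law `μ`. If `μ ≠ ν`, then the likelihood-ratio product
`Π_{k=1}^{N} ν(X_k)/μ(X_k)` converges to `0` almost surely as `N → ∞` (and almost surely
`μ(X_k) > 0` for every `k ≥ 1`, so the ratios are well defined). -/
theorem likelihood_ratio_product_tendsto_zero
    {S : Type*} [Fintype S] [Nonempty S] [MeasurableSpace S] [MeasurableSingletonClass S]
    (μ ν : S → ℝ)
    (hμ_nonneg : ∀ s, 0 ≤ μ s) (hμ_sum : ∑ s, μ s = 1)
    (hν_nonneg : ∀ s, 0 ≤ ν s) (hν_sum : ∑ s, ν s = 1)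
    (hne : μ ≠ ν)
    {Ω : Type*} [MeasurableSpace Ω] (P : Measure Ω) [IsProbabilityMeasure P]
    (X : ℕ → Ω → S)
    (hX_meas : ∀ k, 1 ≤ k → Measurable (X k))
    (hX_law : ∀ k, 1 ≤ k → ∀ s, P {ω | X k ω = s} = ENNReal.ofReal (μ s))
    (hX_indep : ProbabilityTheory.iIndepFun
      (fun k : {k : ℕ // 1 ≤ k} => X k.1) P) :
    ∀ᵐ ω ∂P, (∀ k, 1 ≤ k → 0 < μ (X k ω)) ∧
      Tendsto (fun N => ∏ k ∈ Finset.Icc 1 N, ν (X k ω) / μ (X k ω)) atTop (nhds 0) := by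
  classical
  set g : S → ℝ := fun s => Real.sqrt (ν s / μ s) with hg_def
  set ρ : ℝ := ∑ s, Real.sqrt (μ s * ν s) with hρ_def
  have hg_nonneg : ∀ s, 0 ≤ g s := fun s => Real.sqrt_nonneg _
  have hρ_nonneg : 0 ≤ ρ := Finset.sum_nonneg fun s _ => Real.sqrt_nonneg _
  -- ρ < 1
  have hρ_lt : ρ < 1 := by
    obtain ⟨s0, hs0⟩ : ∃ s, μ s ≠ ν s := by
      by_contra h; push_neg at h; exact hne (funext h)
    have hlt : ρ < ∑ s, (μ s + ν s) / 2 := by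
      refine Finset.sum_lt_sum (fun s _ => ?_) ⟨s0, Finset.mem_univ s0, ?_⟩
      · rw [Real.sqrt_mul (hμ_nonneg s)]
        nlinarith [sq_nonneg (Real.sqrt (μ s) - Real.sqrt (ν s)),
          Real.sq_sqrt (hμ_nonneg s), Real.sq_sqrt (hν_nonneg s)]
      · have hne' : Real.sqrt (μ s0) ≠ Real.sqrt (ν s0) := by
          intro h
          exact hs0 ((Real.sqrt_inj (hμ_nonneg s0) (hν_nonneg s0)).mp h)
        have h3 : 0 < (Real.sqrt (μ s0) - Real.sqrt (ν s0)) ^ 2 :=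
          lt_of_le_of_ne (sq_nonneg _) (Ne.symm (pow_ne_zero 2 (sub_ne_zero.mpr hne')))
        rw [Real.sqrt_mul (hμ_nonneg s0)]
        nlinarith [Real.sq_sqrt (hμ_nonneg s0), Real.sq_sqrt (hν_nonneg s0)]
    have hsum : ∑ s, (μ s + ν s) / 2 = 1 := by
      rw [← Finset.sum_div, Finset.sum_add_distrib, hμ_sum, hν_sum]; norm_num
    linarith [hlt, hsum.le]
  have hS_meas : Measurable g := measurable_of_countable g
  -- independence of the g (X k)
  have hF_meas : ∀ k : {k : ℕ // 1 ≤ k}, Measurable (fun ω => g (X k.1 ω)) :=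
    fun k => hS_meas.comp (hX_meas k.1 k.2)
  have hF_indep : ProbabilityTheory.iIndepFun
      (fun (k : {k : ℕ // 1 ≤ k}) ω => g (X k.1 ω)) P :=
    hX_indep.comp (fun _ => g) (fun _ => hS_meas)
  -- single expectation
  have hsingle : ∀ k : {k : ℕ // 1 ≤ k}, ∫ ω, g (X k.1 ω) ∂P = ρ := by
    intro k
    have hrep : (fun ω => g (X k.1 ω))
        = fun ω => ∑ s, Set.indicator {ω' | X k.1 ω' = s} (fun _ => g s) ω := by
      funext ω
      rw [Finset.sum_eq_single (X k.1 ω)]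
      · simp [Set.indicator_of_mem, Set.mem_setOf_eq]
      · intro s _ hs
        apply Set.indicator_of_notMem
        simp only [Set.mem_setOf_eq]
        exact fun h => hs h.symm
      · intro h; exact absurd (Finset.mem_univ _) h
    have hset : ∀ s : S, MeasurableSet {ω' | X k.1 ω' = s} := by
      intro s
      have : {ω' | X k.1 ω' = s} = X k.1 ⁻¹' {s} := by
        ext ω'; simp [Set.mem_preimage]
      rw [this]
      exact hX_meas k.1 k.2 (measurableSet_singleton s)
    rw [hrep, integral_finset_sum _ (fun s _ =>
      (integrable_const (g s)).indicator (hset s))]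
    have hterm : ∀ s : S, ∫ ω, Set.indicator {ω' | X k.1 ω' = s} (fun _ => g s) ω ∂P
        = Real.sqrt (μ s * ν s) := by
      intro s
      rw [integral_indicator_const _ (hset s), measureReal_def, hX_law k.1 k.2 s,
        ENNReal.toReal_ofReal (hμ_nonneg s), smul_eq_mul]
      by_cases h : μ s = 0
      · simp [h]
      · have hμp : 0 < μ s := lt_of_le_of_ne (hμ_nonneg s) (Ne.symm h)
        show μ s * Real.sqrt (ν s / μ s) = Real.sqrt (μ s * ν s)
        rw [Real.sqrt_div (hν_nonneg s), Real.sqrt_mul (hμ_nonneg s)]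
        have hsq : Real.sqrt (μ s) ^ 2 = μ s := Real.sq_sqrt (hμ_nonneg s)
        have hsqpos : 0 < Real.sqrt (μ s) := Real.sqrt_pos.mpr hμp
        field_simp
        nlinarith [hsq, hsqpos, Real.sqrt_nonneg (ν s)]
    rw [Finset.sum_congr rfl (fun s _ => hterm s)]
  -- product expectation
  have hprod : ∀ N : ℕ, ∫ ω, ∏ k ∈ Finset.Icc 1 N, g (X k ω) ∂P = ρ ^ N := by
    intro N
    have h1 : ∀ ω, ∏ k ∈ Finset.Icc 1 N, g (X k ω)
        = ∏ j ∈ (Finset.Icc 1 N).subtype (fun k => 1 ≤ k), g (X j.1 ω) := by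
      intro ω
      have h := Finset.prod_subtype_eq_prod_filter (s := Finset.Icc 1 N)
        (p := fun k => 1 ≤ k) (fun n => g (X n ω))
      rw [Finset.filter_true_of_mem (fun k hk => (Finset.mem_Icc.mp hk).1)] at h
      exact h.symm
    simp_rw [h1]
    rw [my_integral_finset_prod_of_indep _ hF_meas (fun i ω => hg_nonneg _) hF_indep]
    rw [Finset.prod_congr rfl (fun j _ => hsingle j)]
    rw [show (∏ _j ∈ (Finset.Icc 1 N).subtype (fun k => 1 ≤ k), ρ)
        = ∏ _k ∈ Finset.Icc 1 N, ρ by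
      have h := Finset.prod_subtype_eq_prod_filter (s := Finset.Icc 1 N)
        (p := fun k => 1 ≤ k) (fun _ => ρ)
      rw [Finset.filter_true_of_mem (fun k hk => (Finset.mem_Icc.mp hk).1)] at h
      exact h]
    rw [Finset.prod_const, Nat.card_Icc]
    norm_num
  -- integrability of the product
  have hmeas_prod : ∀ N, Measurable (fun ω => ∏ k ∈ Finset.Icc 1 N, g (X k ω)) := by
    intro N
    exact Finset.measurable_prod _ fun k hk =>
      hS_meas.comp (hX_meas k (Finset.mem_Icc.mp hk).1)
  have hprod_nonneg : ∀ N ω, 0 ≤ ∏ k ∈ Finset.Icc 1 N, g (X k ω) :=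
    fun N ω => Finset.prod_nonneg fun k _ => hg_nonneg _
  have hint : ∀ N, Integrable (fun ω => ∏ k ∈ Finset.Icc 1 N, g (X k ω)) P := by
    intro N
    set C : ℝ := ∑ s, g s with hC_def
    have hgC : ∀ s, g s ≤ C := fun s =>
      Finset.single_le_sum (fun s _ => hg_nonneg s) (Finset.mem_univ s)
    refine (integrable_const (C ^ N)).mono' (hmeas_prod N).aestronglyMeasurable ?_
    filter_upwards with ω
    rw [Real.norm_of_nonneg (hprod_nonneg N ω)]
    calc ∏ k ∈ Finset.Icc 1 N, g (X k ω) ≤ ∏ _k ∈ Finset.Icc 1 N, C :=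
        Finset.prod_le_prod (fun k _ => hg_nonneg _) (fun k _ => hgC _)
    _ = C ^ N := by rw [Finset.prod_const, Nat.card_Icc]; norm_num
  -- Borel-Cantelli
  have hBC : ∀ m : ℕ, ∀ᵐ ω ∂P, ∀ᶠ N in atTop,
      ∏ k ∈ Finset.Icc 1 N, g (X k ω) < 1 / ((m : ℝ) + 1) := by
    intro m
    set ε : ℝ := 1 / ((m : ℝ) + 1) with hε_def
    have hε : 0 < ε := by positivity
    set A : ℕ → Set Ω := fun N => {ω | ε ≤ ∏ k ∈ Finset.Icc 1 N, g (X k ω)} with hA_def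
    have hA : ∀ N, P (A N) ≤ ENNReal.ofReal (ε⁻¹ * ρ ^ N) := by
      intro N
      have hm := mul_meas_ge_le_integral_of_nonneg
        (ae_of_all _ fun ω => hprod_nonneg N ω) (hint N) ε
      rw [hprod N] at hm
      rw [← ENNReal.ofReal_toReal (measure_ne_top P (A N))]
      apply ENNReal.ofReal_le_ofReal
      calc (P (A N)).toReal = ε⁻¹ * (ε * (P (A N)).toReal) := by field_simp
      _ ≤ ε⁻¹ * ρ ^ N := mul_le_mul_of_nonneg_left hm (by positivity)
    have hsum : ∑' N, P (A N) ≠ ⊤ := by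
      refine ne_top_of_le_ne_top ?_ (ENNReal.tsum_le_tsum hA)
      rw [← ENNReal.ofReal_tsum_of_nonneg (fun N => by positivity)
        ((summable_geometric_of_lt_one hρ_nonneg hρ_lt).mul_left _)]
      exact ENNReal.ofReal_ne_top
    filter_upwards [MeasureTheory.ae_eventually_notMem hsum] with ω hω
    filter_upwards [hω] with N hN
    exact lt_of_not_ge hN
  have hBC' : ∀ᵐ ω ∂P, ∀ m : ℕ, ∀ᶠ N in atTop,
      ∏ k ∈ Finset.Icc 1 N, g (X k ω) < 1 / ((m : ℝ) + 1) := ae_all_iff.mpr hBC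
  -- positivity of μ (X k ω)
  have hpos : ∀ᵐ ω ∂P, ∀ k, 1 ≤ k → 0 < μ (X k ω) := by
    rw [ae_all_iff]
    intro k
    by_cases hk : 1 ≤ k
    · have hnull : P {ω | μ (X k ω) ≤ 0} = 0 := by
        have hsub : {ω | μ (X k ω) ≤ 0} ⊆ ⋃ s : S, {ω | X k ω = s ∧ μ s = 0} := by
          intro ω hω
          simp only [Set.mem_iUnion, Set.mem_setOf_eq]
          exact ⟨X k ω, rfl, le_antisymm hω (hμ_nonneg _)⟩
        refine measure_mono_null hsub (measure_iUnion_null fun s => ?_)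
        by_cases h : μ s = 0
        · have hsub2 : {ω | X k ω = s ∧ μ s = 0} ⊆ {ω | X k ω = s} :=
            fun ω hω => hω.1
          refine measure_mono_null hsub2 ?_
          rw [hX_law k hk s, h]
          simp
        · have : {ω | X k ω = s ∧ μ s = 0} = ∅ := by
            ext ω; simp [h]
          simp [this]
      have : ∀ᵐ ω ∂P, ¬ μ (X k ω) ≤ 0 := by
        rw [ae_iff]
        simpa using hnull
      filter_upwards [this] with ω hω _
      exact lt_of_not_ge hω
    · exact ae_of_all _ fun ω h => absurd h hk
  -- assemble
  filter_upwards [hpos, hBC'] with ω h1 h2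
  refine ⟨h1, ?_⟩
  have hL : Tendsto (fun N => ∏ k ∈ Finset.Icc 1 N, g (X k ω)) atTop (nhds 0) := by
    rw [Metric.tendsto_atTop]
    intro ε hε
    obtain ⟨m, hm⟩ := exists_nat_one_div_lt hε
    obtain ⟨N₀, hN₀⟩ := eventually_atTop.mp (h2 m)
    refine ⟨N₀, fun n hn => ?_⟩
    rw [Real.dist_eq, sub_zero, abs_of_nonneg (hprod_nonneg n ω)]
    exact lt_trans (hN₀ n hn) hm
  have hsq : (fun N => ∏ k ∈ Finset.Icc 1 N, ν (X k ω) / μ (X k ω))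
      = fun N => (∏ k ∈ Finset.Icc 1 N, g (X k ω)) * (∏ k ∈ Finset.Icc 1 N, g (X k ω)) := by
    funext N
    rw [← Finset.prod_mul_distrib]
    refine Finset.prod_congr rfl fun k _ => ?_
    exact (Real.mul_self_sqrt (div_nonneg (hν_nonneg _) (hμ_nonneg _))).symm
  rw [hsq]
  simpa using hL.mul hL
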